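/- There exists a nonzero constant C such that for all i, j ∈ {1,2,3}, the integral over ℝ³ of ∂ᵢW · ∂ⱼW equals δᵢⱼ · C. -/

import Mathlib

open MeasureTheory

/-- The ground state soliton `W(x) = √3 (1 + 3|x|²)^(-1/2)` on `ℝ³`. -/
noncomputable def W (x : Fin 3 → ℝ) : ℝ :=
  Real.sqrt 3 * (1 + 3 * ∑ i, x i ^ 2) ^ (-(1 : ℝ) / 2)

/-- The `i`-th partial derivative of a function on `ℝ³`. -/
noncomputable def pderiv3 (i : Fin 3) (f : (Fin 3 → ℝ) → ℝ) (x : Fin 3 → ℝ) : ℝ :=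
  fderiv ℝ f x (Pi.single i 1)

/-- The Euclidean Laplacian on `ℝ³`, `Δf = ∑ᵢ ∂ᵢ∂ᵢ f`. -/
noncomputable def laplacian3 (f : (Fin 3 → ℝ) → ℝ) (x : Fin 3 → ℝ) : ℝ :=
  ∑ i, pderiv3 i (pderiv3 i f) x

/-- `ΛW = (1/2)W + x·∇W`, the scaling derivative of the soliton. -/
noncomputable def LamW (x : Fin 3 → ℝ) : ℝ :=
  (1 / 2) * W x + ∑ i, x i * pderiv3 i W x

lemma tpos (x : Fin 3 → ℝ) : (0:ℝ) < 1 + 3 * ∑ k, x k ^ 2 := by positivity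

lemma pderiv3_W (i : Fin 3) (x : Fin 3 → ℝ) :
    pderiv3 i W x = -3 * Real.sqrt 3 * x i * (1 + 3 * ∑ k, x k ^ 2) ^ (-(3:ℝ)/2) := by
  have ht := tpos x
  set P : Fin 3 → (Fin 3 → ℝ) →L[ℝ] ℝ :=
    fun k => ContinuousLinearMap.proj (R := ℝ) (φ := fun _ : Fin 3 => ℝ) k with hP
  have hS : HasFDerivAt (fun y : Fin 3 → ℝ => 1 + 3 * ∑ k, y k * y k)
      ((3:ℝ) • ∑ k, (x k • P k + x k • P k)) x := by
    apply HasFDerivAt.const_add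
    apply HasFDerivAt.const_mul
    apply HasFDerivAt.fun_sum
    intro k _
    exact ((P k).hasFDerivAt (x := x)).mul ((P k).hasFDerivAt (x := x))
  have hsum : (∑ k, x k * x k) = ∑ k, x k ^ 2 := by simp [pow_two]
  have hg : HasDerivAt (fun t : ℝ => Real.sqrt 3 * t ^ (-(1:ℝ)/2))
      (Real.sqrt 3 * ((-(1:ℝ)/2) * (1 + 3 * ∑ k, x k ^ 2) ^ ((-(1:ℝ)/2) - 1)))
      (1 + 3 * ∑ k, x k * x k) := by
    rw [hsum]
    exact (Real.hasDerivAt_rpow_const (Or.inl ht.ne')).const_mul (Real.sqrt 3)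
  have hW : HasFDerivAt W
      ((Real.sqrt 3 * ((-(1:ℝ)/2) * (1 + 3 * ∑ k, x k ^ 2) ^ ((-(1:ℝ)/2) - 1))) •
        ((3:ℝ) • ∑ k, (x k • P k + x k • P k))) x := by
    have := hg.comp_hasFDerivAt x hS
    unfold W
    simp_rw [pow_two]
    convert this using 2
    case e'_12 => simp [pow_two]
    all_goals rfl
  rw [pderiv3, hW.fderiv]
  have hone : ∀ c : Fin 3 → ℝ, (∑ k, c k * Pi.single (M := fun _ => ℝ) i 1 k) = c i := by
    intro c; simp [Pi.single_apply, mul_ite, Finset.sum_ite_eq']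
  have hexp : ((-(1:ℝ)/2) - 1) = (-(3:ℝ)/2) := by norm_num
  simp only [ContinuousLinearMap.smul_apply, ContinuousLinearMap.coe_sum',
    Finset.sum_apply, ContinuousLinearMap.add_apply, ContinuousLinearMap.coe_smul',
    Pi.smul_apply, hP, ContinuousLinearMap.proj_apply, smul_eq_mul, hexp]
  rw [show (∑ k, (x k * Pi.single (M := fun _ => ℝ) i 1 k + x k * Pi.single (M := fun _ => ℝ) i 1 k)) = 2 * x i by
    rw [Finset.sum_add_distrib, hone]; ring]
  ring

lemma prodW (i j : Fin 3) (x : Fin 3 → ℝ) :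
    pderiv3 i W x * pderiv3 j W x
      = 27 * (x i * x j) * (((1 + 3 * ∑ k, x k ^ 2) ^ (3:ℕ))⁻¹) := by
  have ht := tpos x
  rw [pderiv3_W, pderiv3_W]
  have h1 : (1 + 3 * ∑ k, x k ^ 2) ^ (-(3:ℝ)/2) * (1 + 3 * ∑ k, x k ^ 2) ^ (-(3:ℝ)/2)
      = ((1 + 3 * ∑ k, x k ^ 2) ^ (3:ℕ))⁻¹ := by
    rw [← Real.rpow_add ht, show (-(3:ℝ)/2 + -(3:ℝ)/2) = -((3:ℕ):ℝ) by norm_num,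
      Real.rpow_neg ht.le, Real.rpow_natCast]
  have h3 : Real.sqrt 3 * Real.sqrt 3 = 3 := Real.mul_self_sqrt (by norm_num)
  calc (-3 * Real.sqrt 3 * x i * (1 + 3 * ∑ k, x k ^ 2) ^ (-(3:ℝ)/2)) *
        (-3 * Real.sqrt 3 * x j * (1 + 3 * ∑ k, x k ^ 2) ^ (-(3:ℝ)/2))
      = (Real.sqrt 3 * Real.sqrt 3) * (9 * (x i * x j)) *
        ((1 + 3 * ∑ k, x k ^ 2) ^ (-(3:ℝ)/2) * (1 + 3 * ∑ k, x k ^ 2) ^ (-(3:ℝ)/2)) := by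
        ring
    _ = 27 * (x i * x j) * (((1 + 3 * ∑ k, x k ^ 2) ^ (3:ℕ))⁻¹) := by rw [h1, h3]; ring

lemma norm_sq_le_sum (x : Fin 3 → ℝ) : ‖x‖^2 ≤ ∑ k, x k ^ 2 := by
  have hs : (0:ℝ) ≤ ∑ k, x k ^ 2 := by positivity
  have h : ‖x‖ ≤ Real.sqrt (∑ k, x k ^ 2) := by
    rw [pi_norm_le_iff_of_nonneg (Real.sqrt_nonneg _)]
    intro k
    rw [Real.norm_eq_abs, ← Real.sqrt_sq_eq_abs]
    exact Real.sqrt_le_sqrt (Finset.single_le_sum (fun k _ => sq_nonneg (x k))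
      (Finset.mem_univ k))
  calc ‖x‖^2 ≤ (Real.sqrt (∑ k, x k ^ 2))^2 := by
        exact pow_le_pow_left₀ (norm_nonneg x) h 2
    _ = ∑ k, x k ^ 2 := Real.sq_sqrt hs

lemma continuous_prodW (i j : Fin 3) :
    Continuous (fun x : Fin 3 → ℝ => pderiv3 i W x * pderiv3 j W x) := by
  have : (fun x : Fin 3 → ℝ => pderiv3 i W x * pderiv3 j W x)
      = fun x => 27 * (x i * x j) * (((1 + 3 * ∑ k, x k ^ 2) ^ (3:ℕ))⁻¹) :=
    funext (prodW i j)
  rw [this]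
  refine (continuous_const.mul ((continuous_apply i).mul (continuous_apply j))).mul
    (Continuous.inv₀ (by continuity) fun x => by positivity)

lemma integrable_prodW (i j : Fin 3) :
    Integrable (fun x : Fin 3 → ℝ => pderiv3 i W x * pderiv3 j W x) := by
  have hr : ((Module.finrank ℝ (Fin 3 → ℝ) : ℝ) < 4) := by
    simp [Module.finrank_pi]; norm_num
  have base : Integrable (fun x : Fin 3 → ℝ => ((1:ℝ) + ‖x‖^2) ^ (-(4:ℝ)/2)) :=
    integrable_rpow_neg_one_add_norm_sq hr
  refine (base.const_mul 27).mono' (continuous_prodW i j).aestronglyMeasurable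
    (Filter.Eventually.of_forall fun x => ?_)
  rw [prodW]
  have ht := tpos x
  have hu : (0:ℝ) < 1 + ‖x‖^2 := by positivity
  have h2 : 1 + ‖x‖^2 ≤ 1 + 3 * ∑ k, x k ^ 2 := by
    have h3 : (0:ℝ) ≤ ∑ k, x k ^ 2 := by positivity
    nlinarith [norm_sq_le_sum x]
  have hxi : |x i| ≤ ‖x‖ := by
    simpa [Real.norm_eq_abs] using norm_le_pi_norm x i
  have hxj : |x j| ≤ ‖x‖ := by
    simpa [Real.norm_eq_abs] using norm_le_pi_norm x j
  have hx2 : |x i * x j| ≤ ‖x‖^2 := by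
    rw [abs_mul, pow_two]
    exact mul_le_mul hxi hxj (abs_nonneg _) (norm_nonneg _)
  have hrpow : ((1:ℝ) + ‖x‖^2) ^ (-(4:ℝ)/2) = (((1:ℝ) + ‖x‖^2) ^ (2:ℕ))⁻¹ := by
    rw [show (-(4:ℝ)/2) = -((2:ℕ):ℝ) by norm_num, Real.rpow_neg hu.le, Real.rpow_natCast]
  rw [Real.norm_eq_abs, hrpow]
  have ht3 : (1 + ‖x‖^2) ^ (3:ℕ) ≤ (1 + 3 * ∑ k, x k ^ 2) ^ (3:ℕ) :=
    pow_le_pow_left₀ hu.le h2 3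
  have hinv : ((1 + 3 * ∑ k, x k ^ 2) ^ (3:ℕ))⁻¹ ≤ ((1 + ‖x‖^2) ^ (3:ℕ))⁻¹ :=
    inv_anti₀ (by positivity) ht3
  have h1 : ‖x‖^2 ≤ 1 + ‖x‖^2 := by nlinarith
  calc |27 * (x i * x j) * (((1 + 3 * ∑ k, x k ^ 2) ^ (3:ℕ))⁻¹)|
      = 27 * (|x i * x j| * (((1 + 3 * ∑ k, x k ^ 2) ^ (3:ℕ))⁻¹)) := by
        rw [abs_mul, abs_mul, abs_of_nonneg (a := ((1 + 3 * ∑ k, x k ^ 2) ^ (3:ℕ))⁻¹)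
          (by positivity)]
        norm_num [mul_assoc]
    _ ≤ 27 * (‖x‖^2 * (((1 + ‖x‖^2) ^ (3:ℕ))⁻¹)) := by
        gcongr
    _ ≤ 27 * ((1 + ‖x‖^2) * (((1 + ‖x‖^2) ^ (3:ℕ))⁻¹)) := by gcongr
    _ = 27 * (((1 + ‖x‖^2) ^ (2:ℕ))⁻¹) := by
        have hne : (1 + ‖x‖^2) ≠ 0 := hu.ne'
        field_simp

noncomputable def negEquiv (i : Fin 3) : (Fin 3 → ℝ) ≃ᵐ (Fin 3 → ℝ) :=
  MeasurableEquiv.piCongrRight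
    (fun k => if k = i then MeasurableEquiv.neg ℝ else MeasurableEquiv.refl ℝ)

lemma negEquiv_apply (i : Fin 3) (x : Fin 3 → ℝ) (k : Fin 3) :
    negEquiv i x k = if k = i then -x k else x k := by
  show (if k = i then MeasurableEquiv.neg ℝ else MeasurableEquiv.refl ℝ) (x k) = _
  split <;> simp

lemma negEquiv_mp (i : Fin 3) :
    MeasurePreserving (negEquiv i) (volume : Measure (Fin 3 → ℝ)) volume := by
  have h := measurePreserving_pi (fun _ : Fin 3 => (volume : Measure ℝ))
    (fun _ : Fin 3 => (volume : Measure ℝ))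
    (f := fun k t => if k = i then -t else t) (fun k => ?_)
  · have : ⇑(negEquiv i) = fun (a : Fin 3 → ℝ) k => if k = i then -(a k) else a k := by
      funext a k
      rw [negEquiv_apply]
    rw [show (volume : Measure (Fin 3 → ℝ)) = Measure.pi fun _ => volume from rfl]
    exact this ▸ h
  · by_cases hk : k = i
    · simp only [hk, if_pos]
      simpa using Measure.measurePreserving_neg (volume : Measure ℝ)
    · simp only [hk, if_neg, ite_false]
      exact MeasurePreserving.id _

lemma integral_off (i j : Fin 3) (hij : i ≠ j) :
    ∫ x : Fin 3 → ℝ, pderiv3 i W x * pderiv3 j W x = 0 := by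
  set f := fun x : Fin 3 → ℝ => pderiv3 i W x * pderiv3 j W x with hf
  have h1 : ∫ x, f (negEquiv i x) = ∫ x, f x := (negEquiv_mp i).integral_comp' f
  have h2 : ∀ x, f (negEquiv i x) = - f x := by
    intro x
    rw [hf]
    simp only
    rw [prodW, prodW]
    have hsum : (∑ k, (negEquiv i x k) ^ 2) = ∑ k, x k ^ 2 := by
      refine Finset.sum_congr rfl fun k _ => ?_
      rw [negEquiv_apply]
      split <;> ring
    rw [negEquiv_apply, negEquiv_apply, if_pos rfl, if_neg (Ne.symm hij), hsum]
    ring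
  have h3 : ∫ x, f x = - ∫ x, f x := by
    conv_lhs => rw [← h1]
    simp_rw [h2]
    exact integral_neg f
  linarith

lemma integral_diag (i : Fin 3) :
    ∫ x : Fin 3 → ℝ, pderiv3 i W x * pderiv3 i W x
      = ∫ x : Fin 3 → ℝ, pderiv3 0 W x * pderiv3 0 W x := by
  have hmp := volume_measurePreserving_piCongrLeft (fun _ : Fin 3 => ℝ)
    (Equiv.swap (0 : Fin 3) i)
  have h1 := hmp.integral_comp' (f := MeasurableEquiv.piCongrLeft (fun _ : Fin 3 => ℝ)
    (Equiv.swap (0 : Fin 3) i)) (fun y : Fin 3 → ℝ => pderiv3 0 W y * pderiv3 0 W y)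
  rw [← h1]
  congr 1
  funext x
  symm
  show pderiv3 0 W (MeasurableEquiv.piCongrLeft (fun _ : Fin 3 => ℝ) (Equiv.swap (0 : Fin 3) i) x)
      * pderiv3 0 W (MeasurableEquiv.piCongrLeft (fun _ : Fin 3 => ℝ) (Equiv.swap (0 : Fin 3) i) x)
      = pderiv3 i W x * pderiv3 i W x
  set e := MeasurableEquiv.piCongrLeft (fun _ : Fin 3 => ℝ) (Equiv.swap (0 : Fin 3) i) with he
  have happ : ∀ (k : Fin 3), e x (Equiv.swap (0 : Fin 3) i k) = x k := by
    intro k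
    rw [he, MeasurableEquiv.coe_piCongrLeft]
    exact Equiv.piCongrLeft_apply_apply (fun _ : Fin 3 => ℝ) (Equiv.swap (0 : Fin 3) i) x k
  rw [prodW, prodW]
  have hsum : (∑ k, (e x k) ^ 2) = ∑ k, x k ^ 2 := by
    rw [← Equiv.sum_comp (Equiv.swap (0 : Fin 3) i) (fun k => (e x k) ^ 2)]
    refine Finset.sum_congr rfl fun k _ => ?_
    rw [happ]
  have h0 : e x 0 = x i := by
    have := happ i
    rwa [show Equiv.swap (0 : Fin 3) i i = 0 from Equiv.swap_apply_right 0 i] at this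
  rw [hsum, h0]

lemma integral_diag_pos :
    0 < ∫ x : Fin 3 → ℝ, pderiv3 0 W x * pderiv3 0 W x := by
  have hnn : 0 ≤ fun x : Fin 3 → ℝ => pderiv3 0 W x * pderiv3 0 W x := by
    intro x
    show (0:ℝ) ≤ pderiv3 0 W x * pderiv3 0 W x
    rw [prodW]
    have := tpos x
    have h1 : 0 ≤ x 0 * x 0 := mul_self_nonneg _
    positivity
  rw [integral_pos_iff_support_of_nonneg hnn (integrable_prodW 0 0)]
  have hsub : {x : Fin 3 → ℝ | x 0 ≠ 0} ⊆
      Function.support (fun x : Fin 3 → ℝ => pderiv3 0 W x * pderiv3 0 W x) := by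
    intro x hx
    have := tpos x
    have h1 : 0 < x 0 * x 0 := mul_self_pos.mpr hx
    rw [Function.mem_support, prodW]
    positivity
  have hopen : IsOpen {x : Fin 3 → ℝ | x 0 ≠ 0} :=
    isOpen_compl_singleton.preimage (continuous_apply 0)
  have hne : {x : Fin 3 → ℝ | x 0 ≠ 0}.Nonempty := ⟨fun _ => 1, by norm_num⟩
  calc (0:ENNReal) < volume {x : Fin 3 → ℝ | x 0 ≠ 0} := hopen.measure_pos volume hne
    _ ≤ _ := measure_mono hsub


/-- `∫ ∂ᵢW ∂ⱼW = δᵢⱼ C` for some nonzero constant `C`. -/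
theorem integral_pderivW_mul_pderivW :
    ∃ C : ℝ, C ≠ 0 ∧ ∀ i j : Fin 3,
      ∫ x : Fin 3 → ℝ, pderiv3 i W x * pderiv3 j W x =
        if i = j then C else 0 := by
  refine ⟨∫ x : Fin 3 → ℝ, pderiv3 0 W x * pderiv3 0 W x, integral_diag_pos.ne', ?_⟩
  intro i j
  by_cases h : i = j
  · subst h
    rw [if_pos rfl]
    exact integral_diag i
  · rw [if_neg h]
    exact integral_off i j h
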